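/- Let L be a loop with identity e. Then the set Λ(L) of all left translations and the set R(L) of all right translations are left transversals to the inner mapping group Inn(L) in the multiplication group Mult(L); moreover a⁻¹b⁻¹ab ∈ Inn(L) for every a ∈ Λ(L) and b ∈ R(L), and the only normal subgroup of Mult(L) contained in Inn(L) is the trivial subgroup. -/

import Mathlib

/-- A loop: a binary operation with two-sided identity such that all left and
right translations are bijections. -/
structure LoopStruct (L : Type*) where
  mul : L → L → L
  e : L
  one_mul : ∀ x, mul e x = x
  mul_one : ∀ x, mul x e = x
  left_bij : ∀ a, Function.Bijective (mul a)
  right_bij : ∀ a, Function.Bijective (fun x => mul x a)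

/-- The left translation `λ_a` as a permutation of `L`. -/
noncomputable def leftTrans {L : Type*} (S : LoopStruct L) (a : L) : Equiv.Perm L :=
  Equiv.ofBijective _ (S.left_bij a)

/-- The right translation `ρ_a` as a permutation of `L`. -/
noncomputable def rightTrans {L : Type*} (S : LoopStruct L) (a : L) : Equiv.Perm L :=
  Equiv.ofBijective _ (S.right_bij a)

/-- The multiplication group `Mult(L)`. -/
noncomputable def MultGroup {L : Type*} (S : LoopStruct L) : Subgroup (Equiv.Perm L) :=
  Subgroup.closure (Set.range (leftTrans S) ∪ Set.range (rightTrans S))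

/-- The inner mapping group `Inn(L)`: the stabilizer of `e` in `Mult(L)`. -/
noncomputable def InnGroup {L : Type*} (S : LoopStruct L) : Subgroup ↥(MultGroup S) :=
  Subgroup.comap (MultGroup S).subtype (MulAction.stabilizer (Equiv.Perm L) S.e)

/-- The set `Λ(L)` of all left translations, inside `Mult(L)`. -/
noncomputable def leftSet {L : Type*} (S : LoopStruct L) : Set ↥(MultGroup S) :=
  {g | ∃ a : L, (g : Equiv.Perm L) = leftTrans S a}

/-- The set `R(L)` of all right translations, inside `Mult(L)`. -/
noncomputable def rightSet {L : Type*} (S : LoopStruct L) : Set ↥(MultGroup S) :=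
  {g | ∃ a : L, (g : Equiv.Perm L) = rightTrans S a}

/-- `A` is a left transversal to `S` in the ambient group: every element has a
unique factorization `k = a * s` with `a ∈ A`, `s ∈ S`. -/
def IsLeftTransversal {G : Type*} [Group G] (A S : Set G) : Prop :=
  ∀ k : G, ∃! p : G × G, p.1 ∈ A ∧ p.2 ∈ S ∧ k = p.1 * p.2


section Aux

variable {L : Type*} (S : LoopStruct L)

lemma leftTrans_e (a : L) : leftTrans S a S.e = a := S.mul_one a
lemma rightTrans_e (a : L) : rightTrans S a S.e = a := S.one_mul a

lemma leftTrans_mem (a : L) : leftTrans S a ∈ MultGroup S :=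
  Subgroup.subset_closure (Or.inl ⟨a, rfl⟩)

lemma rightTrans_mem (a : L) : rightTrans S a ∈ MultGroup S :=
  Subgroup.subset_closure (Or.inr ⟨a, rfl⟩)

noncomputable def lam (a : L) : ↥(MultGroup S) := ⟨leftTrans S a, leftTrans_mem S a⟩
noncomputable def rho (a : L) : ↥(MultGroup S) := ⟨rightTrans S a, rightTrans_mem S a⟩

lemma mem_inn_iff (g : ↥(MultGroup S)) :
    g ∈ InnGroup S ↔ (g : Equiv.Perm L) S.e = S.e := Iff.rfl

lemma transversal_of (T : Set ↥(MultGroup S)) (f : L → ↥(MultGroup S))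
    (hT : ∀ g, g ∈ T ↔ ∃ a, (g : Equiv.Perm L) = (f a : Equiv.Perm L))
    (hfe : ∀ a, (f a : Equiv.Perm L) S.e = a) :
    IsLeftTransversal T ((InnGroup S : Subgroup ↥(MultGroup S)) : Set ↥(MultGroup S)) := by
  intro k
  set a : L := (k : Equiv.Perm L) S.e with ha
  refine ⟨(f a, (f a)⁻¹ * k), ⟨(hT _).2 ⟨a, rfl⟩, ?_, by group⟩, ?_⟩
  · rw [SetLike.mem_coe, mem_inn_iff]
    have : ((((f a)⁻¹ * k : ↥(MultGroup S))) : Equiv.Perm L)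
        = ((f a : Equiv.Perm L))⁻¹ * (k : Equiv.Perm L) := rfl
    rw [this, Equiv.Perm.mul_apply, ← ha]
    have h := (show ∀ (e : Equiv.Perm L) (x : L), e⁻¹ (e x) = x from fun e x => e.symm_apply_apply x) ((f a : Equiv.Perm L)) S.e
    rwa [hfe] at h
  · rintro ⟨g, s⟩ ⟨hg, hs, hk⟩
    obtain ⟨b, hb⟩ := (hT g).1 hg
    rw [SetLike.mem_coe, mem_inn_iff] at hs
    have hka : (k : Equiv.Perm L) S.e = b := by
      rw [hk]
      show ((g : Equiv.Perm L) * (s : Equiv.Perm L)) S.e = b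
      rw [Equiv.Perm.mul_apply, hs, hb, hfe]
    have hab : a = b := by rw [ha, hka]
    have hg' : g = f a := Subtype.ext (by rw [hb, hab])
    have hs' : s = (f a)⁻¹ * k := by
      rw [hk, hg']; group
    exact Prod.ext hg' hs'

end Aux

/-- `Λ(L)` and `R(L)` are `Inn(L)`-connected left transversals to `Inn(L)` in
`Mult(L)`, and the core of `Inn(L)` in `Mult(L)` is trivial. -/
theorem translations_are_connected_transversals (L : Type) (S : LoopStruct L) :
    IsLeftTransversal (leftSet S) ((InnGroup S : Subgroup ↥(MultGroup S)) : Set ↥(MultGroup S)) ∧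
    IsLeftTransversal (rightSet S) ((InnGroup S : Subgroup ↥(MultGroup S)) : Set ↥(MultGroup S)) ∧
    (∀ a ∈ leftSet S, ∀ b ∈ rightSet S, a⁻¹ * b⁻¹ * a * b ∈ InnGroup S) ∧
    (∀ N : Subgroup ↥(MultGroup S), N.Normal → N ≤ InnGroup S → N = ⊥) := by
  refine ⟨?_, ?_, ?_, ?_⟩
  · exact transversal_of S (leftSet S) (lam S) (fun g => Iff.rfl) (fun a => leftTrans_e S a)
  · exact transversal_of S (rightSet S) (rho S) (fun g => Iff.rfl) (fun a => rightTrans_e S a)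
  · rintro a ⟨x, hx⟩ b ⟨y, hy⟩
    rw [mem_inn_iff]
    have : ((a⁻¹ * b⁻¹ * a * b : ↥(MultGroup S)) : Equiv.Perm L)
        = (a : Equiv.Perm L)⁻¹ * (b : Equiv.Perm L)⁻¹ * (a : Equiv.Perm L) * (b : Equiv.Perm L) := rfl
    rw [this, hx, hy]
    have h1 : rightTrans S y S.e = y := rightTrans_e S y
    have h2 : (rightTrans S y)⁻¹ (leftTrans S x y) = x := by
      rw [show leftTrans S x y = S.mul x y from rfl,
        show (S.mul x y) = rightTrans S y x from rfl, (show ∀ (e : Equiv.Perm L) (x : L), e⁻¹ (e x) = x from fun e x => e.symm_apply_apply x)]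
    have h3 : (leftTrans S x)⁻¹ x = S.e := by
      have h := (show ∀ (e : Equiv.Perm L) (x : L), e⁻¹ (e x) = x from fun e x => e.symm_apply_apply x) (leftTrans S x) S.e
      rwa [leftTrans_e] at h
    simp only [Equiv.Perm.mul_apply, h1, h2, h3]
  · intro N hN hNI
    rw [eq_bot_iff]
    intro n hn
    have key : ∀ x : L, (n : Equiv.Perm L) x = x := by
      intro x
      have hconj : (lam S x)⁻¹ * n * lam S x ∈ N := by
        have := hN.conj_mem n hn (lam S x)⁻¹
        simpa [mul_assoc] using this
      have := (mem_inn_iff S _).1 (hNI hconj)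
      have hc : (((lam S x)⁻¹ * n * lam S x : ↥(MultGroup S)) : Equiv.Perm L)
          = (leftTrans S x)⁻¹ * (n : Equiv.Perm L) * leftTrans S x := rfl
      rw [hc, Equiv.Perm.mul_apply, Equiv.Perm.mul_apply, leftTrans_e] at this
      have := congrArg (leftTrans S x) this
      rw [(show ∀ (e : Equiv.Perm L) (x : L), e (e⁻¹ x) = x from fun e x => e.apply_symm_apply x), leftTrans_e] at this
      exact this
    have : n = 1 := Subtype.ext (Equiv.ext key)
    simp [this]
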